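/- Let I_1,…,I_t ⊂ S = K[x_1,…,x_n] be nonzero proper monomial ideals with pairwise disjoint supports. Suppose that for each j = 1,…,t there exists k_j such that v(I_j^k) = α(I_j)·k − 1 for all k ≥ k_j. Then for every k ≥ 1, v((I_1 + ⋯ + I_t)^k) ≥ (min_{1≤j≤t} α(I_j))·k + ( ∑_{j=1}^t α(I_j) − min_{1≤j≤t} α(I_j) − t ). -/

import Mathlib

open MvPolynomial

noncomputable section

/-- The set of associated primes `Ass(L)` of the quotient by an ideal `L`. -/
def assOf {A : Type} [CommRing A] (L : Ideal A) : Set (Ideal A) :=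
  associatedPrimes A (A ⧸ L)

/-- `𝔄` is the stable value `Ass^∞(L)` of `Ass(L^k)` for all large `k`. -/
def IsStableAssValue {A : Type} [CommRing A] (L : Ideal A) (𝔄 : Set (Ideal A)) : Prop :=
  ∃ N : ℕ, ∀ k : ℕ, N ≤ k → assOf (L ^ k) = 𝔄

/-- `Ass^*(L) = ⋃_{k ≥ 1} Ass(L^k)`. -/
def assStar {A : Type} [CommRing A] (L : Ideal A) : Set (Ideal A) :=
  {p | ∃ k : ℕ, 1 ≤ k ∧ p ∈ assOf (L ^ k)}

/-- The local v-number `v_p(L)`: the least degree of a homogeneous `f` with `(L : f) = p`. -/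
def vnum {σ K : Type} [Field K] (L p : Ideal (MvPolynomial σ K)) : ℕ :=
  sInf {d : ℕ | ∃ f : MvPolynomial σ K, f.IsHomogeneous d ∧ L.colon (Ideal.span {f}) = p}

/-- The v-number `v(L) = min_{p ∈ Ass(L)} v_p(L)`. -/
def vnumber {σ K : Type} [Field K] (L : Ideal (MvPolynomial σ K)) : ℕ :=
  sInf {d : ℕ | ∃ p ∈ assOf L, ∃ f : MvPolynomial σ K,
    f.IsHomogeneous d ∧ L.colon (Ideal.span {f}) = p}

/-- The initial degree `α(L)`: the least `d` such that `L` contains a nonzero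
homogeneous element of degree `d`. -/
def alphaDeg {σ K : Type} [Field K] (L : Ideal (MvPolynomial σ K)) : ℕ :=
  sInf {d : ℕ | ∃ f ∈ L, f ≠ 0 ∧ MvPolynomial.IsHomogeneous f d}

/-- A graded (homogeneous) ideal: one containing all homogeneous components
of each of its elements. -/
def IsGradedIdeal {σ K : Type} [Field K] (I : Ideal (MvPolynomial σ K)) : Prop :=
  ∀ f ∈ I, ∀ d : ℕ, homogeneousComponent d f ∈ I

/-- A monomial ideal: an ideal generated by monomials. -/
def IsMonomialIdeal {σ K : Type} [Field K] (I : Ideal (MvPolynomial σ K)) : Prop :=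
  ∃ G : Set (σ →₀ ℕ), I = Ideal.span ((fun a => (monomial a (1 : K))) '' G)

/-- Exponent vectors of the minimal monomial generators of a monomial ideal. -/
def minimalMonGens {σ K : Type} [Field K] (I : Ideal (MvPolynomial σ K)) : Set (σ →₀ ℕ) :=
  {a | (monomial a (1 : K)) ∈ I ∧
    ∀ b : σ →₀ ℕ, (monomial b (1 : K)) ∈ I → b ≤ a → b = a}

/-- The support of a monomial ideal: the union of the supports of its
minimal monomial generators. -/
def suppIdeal {σ K : Type} [Field K] (I : Ideal (MvPolynomial σ K)) : Set σ :=
  ⋃ a ∈ minimalMonGens I, (a.support : Set σ)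

namespace Stmt9Aux

open Finsupp

variable {K : Type} [Field K] {n : ℕ}

/-- Degree of an exponent vector is additive. -/
lemma degE_add (a b : Fin n →₀ ℕ) : (a + b).degree = a.degree + b.degree := by
  simp [Finsupp.degree_eq_weight_one, map_add]

lemma degE_mono {a b : Fin n →₀ ℕ} (h : a ≤ b) : a.degree ≤ b.degree := by
  have : b = a + (b - a) := by rw [add_comm, tsub_add_cancel_of_le h]
  rw [this, degE_add]; exact Nat.le_add_right _ _

lemma degE_sum {t : ℕ} (f : Fin t → (Fin n →₀ ℕ)) :
    (∑ j, f j).degree = ∑ j, (f j).degree := by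
  simp [Finsupp.degree_eq_weight_one, map_sum]

lemma degE_single (i : Fin n) : (Finsupp.single i 1).degree = 1 := by
  exact Finsupp.degree_single i 1

lemma degree_eq_of_mem_support {f : MvPolynomial (Fin n) K} {d : ℕ} {m : Fin n →₀ ℕ}
    (hf : f.IsHomogeneous d) (hm : m ∈ f.support) : m.degree = d := by
  rw [Finsupp.degree_eq_weight_one]
  exact hf (MvPolynomial.mem_support_iff.mp hm)

/-- span of monomials with exponents in `G`. -/
def msp (G : Set (Fin n →₀ ℕ)) : Ideal (MvPolynomial (Fin n) K) :=
  Ideal.span ((fun a => MvPolynomial.monomial a (1 : K)) '' G)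

lemma monomial_mem_msp {G : Set (Fin n →₀ ℕ)} {a b : Fin n →₀ ℕ} (hb : b ∈ G) (hle : b ≤ a) :
    MvPolynomial.monomial a (1 : K) ∈ msp (K := K) G := by
  have : MvPolynomial.monomial a (1:K)
      = MvPolynomial.monomial (a - b) (1:K) * MvPolynomial.monomial b (1:K) := by
    rw [MvPolynomial.monomial_mul, one_mul, tsub_add_cancel_of_le hle]
  rw [this]
  exact Ideal.mul_mem_left _ _ (Ideal.subset_span ⟨b, hb, rfl⟩)

lemma exists_le_of_mem_support_mul {p q : MvPolynomial (Fin n) K} {m : Fin n →₀ ℕ}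
    (hm : m ∈ (p * q).support) : ∃ m' ∈ q.support, m' ≤ m := by
  classical
  rw [MvPolynomial.mem_support_iff, MvPolynomial.coeff_mul] at hm
  obtain ⟨x, hx, hne⟩ := Finset.exists_ne_zero_of_sum_ne_zero hm
  refine ⟨x.2, ?_, ?_⟩
  · rw [MvPolynomial.mem_support_iff]
    intro h; rw [h, mul_zero] at hne; exact hne rfl
  · have hxm := Finset.HasAntidiagonal.mem_antidiagonal.mp hx
    rw [← hxm]; exact le_add_self

lemma mem_msp_iff {G : Set (Fin n →₀ ℕ)} {f : MvPolynomial (Fin n) K} :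
    f ∈ msp (K := K) G ↔ ∀ m ∈ f.support, ∃ a ∈ G, a ≤ m := by
  constructor
  · intro hf
    refine Submodule.span_induction ?_ ?_ ?_ ?_ hf
    · rintro x ⟨a, ha, rfl⟩ m hm
      classical
      rw [MvPolynomial.support_monomial] at hm
      simp only [one_ne_zero, if_false, Finset.mem_singleton] at hm
      exact ⟨a, ha, hm ▸ le_refl _⟩
    · intro m hm; simp at hm
    · intro x y _ _ hx hy m hm
      rcases Finset.mem_union.mp (MvPolynomial.support_add hm) with h | h
      · exact hx m h
      · exact hy m h
    · intro r x _ hx m hm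
      rw [smul_eq_mul] at hm
      obtain ⟨m', hm', hle⟩ := exists_le_of_mem_support_mul (p := r) (q := x) hm
      obtain ⟨a, ha, hale⟩ := hx m' hm'
      exact ⟨a, ha, hale.trans hle⟩
  · intro h
    rw [f.as_sum]
    refine Ideal.sum_mem _ fun m hm => ?_
    obtain ⟨a, haG, hle⟩ := h m hm
    have : MvPolynomial.monomial m (MvPolynomial.coeff m f)
        = MvPolynomial.C (MvPolynomial.coeff m f) * MvPolynomial.monomial m (1:K) := by
      rw [MvPolynomial.C_mul_monomial, mul_one]
    rw [this]
    exact Ideal.mul_mem_left _ _ (monomial_mem_msp haG hle)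

end Stmt9Aux

namespace Stmt9Aux

open Finsupp

variable {K : Type} [Field K] {n : ℕ}

/-- `setPow G c`: sums of `c` elements of `G`. -/
def setPow (G : Set (Fin n →₀ ℕ)) : ℕ → Set (Fin n →₀ ℕ)
  | 0 => {0}
  | c + 1 => {x | ∃ a ∈ G, ∃ b ∈ setPow G c, x = a + b}

lemma zero_mem_setPow_zero (G : Set (Fin n →₀ ℕ)) : (0 : Fin n →₀ ℕ) ∈ setPow G 0 := rfl

lemma msp_mul {G H : Set (Fin n →₀ ℕ)} :
    msp (K := K) G * msp (K := K) H
      = msp (K := K) {x | ∃ a ∈ G, ∃ b ∈ H, x = a + b} := by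
  unfold msp
  rw [Ideal.span_mul_span']
  apply le_antisymm <;> rw [Ideal.span_le]
  · rintro x hx
    obtain ⟨s, hs, u, hu, rfl⟩ := Set.mem_mul.mp hx
    obtain ⟨a, ha, rfl⟩ := hs
    obtain ⟨b, hb, rfl⟩ := hu
    exact Ideal.subset_span
      ⟨a + b, ⟨a, ha, b, hb, rfl⟩, by rw [MvPolynomial.monomial_mul, one_mul]⟩
  · rintro x ⟨y, ⟨a, ha, b, hb, rfl⟩, rfl⟩
    apply Ideal.subset_span
    have hmm : MvPolynomial.monomial (a + b) (1:K)
        = MvPolynomial.monomial a (1:K) * MvPolynomial.monomial b (1:K) := by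
      rw [MvPolynomial.monomial_mul, one_mul]
    show MvPolynomial.monomial (a + b) (1:K) ∈ _
    rw [hmm]
    exact Set.mul_mem_mul (Set.mem_image_of_mem _ ha) (Set.mem_image_of_mem _ hb)

lemma msp_pow {G : Set (Fin n →₀ ℕ)} (c : ℕ) :
    (msp (K := K) G) ^ c = msp (K := K) (setPow G c) := by
  induction c with
  | zero =>
    rw [pow_zero, Ideal.one_eq_top]
    unfold msp setPow
    rw [Set.image_singleton, MvPolynomial.monomial_zero', map_one, Ideal.span_singleton_one]
  | succ c ih =>
    rw [pow_succ', ih, msp_mul]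
    rfl

lemma msp_iUnion {t : ℕ} (Gs : Fin t → Set (Fin n →₀ ℕ)) :
    ∑ j, msp (K := K) (Gs j) = msp (K := K) (⋃ j, Gs j) := by
  have h2 : msp (K := K) (⋃ j, Gs j) = ⨆ j, msp (K := K) (Gs j) := by
    unfold msp
    rw [Set.image_iUnion]
    exact Submodule.span_iUnion _
  rw [h2]
  apply le_antisymm
  · classical
    have : ∀ s : Finset (Fin t), (∑ j ∈ s, msp (K := K) (Gs j)) ≤ ⨆ j, msp (K := K) (Gs j) := by
      intro s
      induction s using Finset.induction_on with
      | empty => simp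
      | insert _ _ hns ih =>
        rw [Finset.sum_insert hns, Submodule.add_eq_sup]
        exact sup_le (le_iSup (fun j => msp (K := K) (Gs j)) _) ih
    exact this Finset.univ
  · refine iSup_le fun j => ?_
    exact Finset.single_le_sum (f := fun j => msp (K := K) (Gs j))
      (fun i _ => bot_le) (Finset.mem_univ j)

lemma setPow_add {G : Set (Fin n →₀ ℕ)} {c d : ℕ} {x y : Fin n →₀ ℕ}
    (hx : x ∈ setPow G c) (hy : y ∈ setPow G d) : x + y ∈ setPow G (c + d) := by
  induction c generalizing x with
  | zero =>
    have : x = 0 := hx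
    rw [this, zero_add, zero_add]; exact hy
  | succ c ih =>
    obtain ⟨a, ha, b, hb, rfl⟩ := hx
    have hcd : c + 1 + d = (c + d) + 1 := by omega
    rw [hcd]
    show ∃ a' ∈ G, ∃ b' ∈ setPow G (c + d), a + b + y = a' + b'
    exact ⟨a, ha, b + y, ih hb, add_assoc a b y⟩

lemma setPow_mono {G G' : Set (Fin n →₀ ℕ)} (h : G ⊆ G') (c : ℕ) :
    setPow G c ⊆ setPow G' c := by
  induction c with
  | zero => exact le_refl _
  | succ c ih =>
    rintro x ⟨a, ha, b, hb, rfl⟩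
    exact ⟨a, h ha, b, ih hb, rfl⟩


lemma sum_mem_setPow {t : ℕ} {Gs : Fin t → Set (Fin n →₀ ℕ)} {c : Fin t → ℕ}
    {B : Fin t → (Fin n →₀ ℕ)} (h : ∀ j, B j ∈ setPow (Gs j) (c j)) :
    ∑ j, B j ∈ setPow (⋃ j, Gs j) (∑ j, c j) := by
  classical
  have : ∀ s : Finset (Fin t), (∑ j ∈ s, B j) ∈ setPow (⋃ j, Gs j) (∑ j ∈ s, c j) := by
    intro s
    induction s using Finset.induction_on with
    | empty => simp [zero_mem_setPow_zero]
    | insert _ _ hns ih =>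
      rw [Finset.sum_insert hns, Finset.sum_insert hns]
      exact setPow_add (setPow_mono (Set.subset_iUnion Gs _) _ (h _)) ih
  exact this Finset.univ

lemma setPow_support {G : Set (Fin n →₀ ℕ)} {T : Set (Fin n)}
    (hG : ∀ g ∈ G, ↑g.support ⊆ T) {c : ℕ} {a : Fin n →₀ ℕ} (ha : a ∈ setPow G c) :
    ↑a.support ⊆ T := by
  induction c generalizing a with
  | zero =>
    have : a = 0 := ha
    simp [this]
  | succ c ih =>
    obtain ⟨x, hx, b, hb, rfl⟩ := ha
    intro i hi
    have hi' : i ∈ (x + b).support := hi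
    rcases Finset.mem_union.mp (Finsupp.support_add hi') with h | h
    · exact hG x hx h
    · exact ih hb h

lemma setPow_degree {G : Set (Fin n →₀ ℕ)} {α : ℕ}
    (hG : ∀ g ∈ G, α ≤ g.degree) {c : ℕ} {a : Fin n →₀ ℕ} (ha : a ∈ setPow G c) :
    c * α ≤ a.degree := by
  induction c generalizing a with
  | zero => simp
  | succ c ih =>
    obtain ⟨x, hx, b, hb, rfl⟩ := ha
    rw [degE_add]
    have h1 := hG x hx
    have h2 := ih hb
    calc (c+1) * α = α + c * α := by ring
    _ ≤ x.degree + b.degree := Nat.add_le_add h1 h2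

end Stmt9Aux

namespace Stmt9Aux

open Finsupp

variable {K : Type} [Field K] {n : ℕ}

lemma setPow_iUnion_decomp {t : ℕ} {Gs : Fin t → Set (Fin n →₀ ℕ)} {k : ℕ} {a : Fin n →₀ ℕ}
    (ha : a ∈ setPow (⋃ j, Gs j) k) :
    ∃ c : Fin t → ℕ, ∑ j, c j = k ∧ ∃ A : Fin t → (Fin n →₀ ℕ),
      (∀ j, A j ∈ setPow (Gs j) (c j)) ∧ ∑ j, A j = a := by
  classical
  induction k generalizing a with
  | zero =>
    have h0 : a = 0 := ha
    exact ⟨fun _ => 0, by simp, fun _ => 0, fun j => zero_mem_setPow_zero _, by simp [h0]⟩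
  | succ k ih =>
    obtain ⟨g, hg, b, hb, rfl⟩ := ha
    obtain ⟨j0, hj0⟩ := Set.mem_iUnion.mp hg
    obtain ⟨c, hcsum, A, hA, hAsum⟩ := ih hb
    refine ⟨Function.update c j0 (c j0 + 1), ?_, Function.update A j0 (g + A j0), ?_, ?_⟩
    · rw [Finset.sum_update_of_mem (Finset.mem_univ j0), Finset.sdiff_singleton_eq_erase]
      rw [← Finset.sum_erase_add _ _ (Finset.mem_univ j0)] at hcsum
      omega
    · intro j
      by_cases hj : j = j0
      · subst hj
        rw [Function.update_self, Function.update_self]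
        exact ⟨g, hj0, A j, hA j, rfl⟩
      · rw [Function.update_of_ne hj, Function.update_of_ne hj]
        exact hA j
    · rw [Finset.sum_update_of_mem (Finset.mem_univ j0), Finset.sdiff_singleton_eq_erase]
      rw [← Finset.sum_erase_add _ _ (Finset.mem_univ j0)] at hAsum
      rw [← hAsum]
      abel

lemma exists_minimal_le {I : Ideal (MvPolynomial (Fin n) K)} :
    ∀ N (a : Fin n →₀ ℕ), a.degree ≤ N → MvPolynomial.monomial a (1:K) ∈ I →
      ∃ b ∈ minimalMonGens I, b ≤ a := by
  intro N
  induction N with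
  | zero =>
    intro a hd ha
    refine ⟨a, ⟨ha, fun b hb hba => ?_⟩, le_refl a⟩
    have h1 : b.degree ≤ a.degree := degE_mono hba
    have h2 : a.degree = 0 := Nat.le_zero.mp hd
    have h3 : b = 0 := (Finsupp.degree_eq_zero_iff b).mp (by omega)
    have h4 : a = 0 := (Finsupp.degree_eq_zero_iff a).mp h2
    rw [h3, h4]
  | succ N ih =>
    intro a hd ha
    by_cases hmin : ∀ b : Fin n →₀ ℕ, MvPolynomial.monomial b (1:K) ∈ I → b ≤ a → b = a
    · exact ⟨a, ⟨ha, hmin⟩, le_refl a⟩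
    · push_neg at hmin
      obtain ⟨b, hbI, hba, hne⟩ := hmin
      have hlt : b.degree < a.degree := by
        have heq : a = b + (a - b) := by rw [add_comm, tsub_add_cancel_of_le hba]
        have hne' : a - b ≠ 0 := by
          intro h0
          apply hne
          rw [heq, h0, add_zero]
        have : 1 ≤ (a - b).degree := by
          rcases Nat.eq_zero_or_pos (a-b).degree with h | h
          · exact absurd ((Finsupp.degree_eq_zero_iff _).mp h) hne'
          · exact h
        calc b.degree < b.degree + (a-b).degree := by omega
        _ = a.degree := by rw [← degE_add, ← heq]
      obtain ⟨b', hb', hb'le⟩ := ih b (by omega) hbI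
      exact ⟨b', hb', hb'le.trans hba⟩

lemma monomialIdeal_eq_msp {I : Ideal (MvPolynomial (Fin n) K)} (hI : IsMonomialIdeal I) :
    I = msp (K := K) (minimalMonGens I) := by
  obtain ⟨G, hG⟩ := hI
  apply le_antisymm
  · have hle : Ideal.span ((fun a => MvPolynomial.monomial a (1:K)) '' G)
        ≤ msp (K := K) (minimalMonGens I) := by
      rw [Ideal.span_le]
      rintro x ⟨a, haG, rfl⟩
      have haI : MvPolynomial.monomial a (1:K) ∈ I := by
        rw [hG]; exact Ideal.subset_span ⟨a, haG, rfl⟩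
      obtain ⟨b, hb, hble⟩ := exists_minimal_le a.degree a (le_refl _) haI
      exact monomial_mem_msp hb hble
    conv_lhs => rw [hG]
    exact hle
  · exact Ideal.span_le.mpr (by rintro x ⟨b, hb, rfl⟩; exact hb.1)

lemma sum_le_add_of_disjoint {t : ℕ} {T : Fin t → Set (Fin n)}
    (hdisj : Pairwise fun a b => Disjoint (T a) (T b))
    {bb g : Fin t → (Fin n →₀ ℕ)} (hsupp : ∀ j, ↑(bb j).support ⊆ T j) {e : Fin n →₀ ℕ}
    (hle : ∀ j, bb j ≤ e + g j) : ∑ j, bb j ≤ e + ∑ j, g j := by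
  classical
  rw [Finsupp.le_def]
  intro i
  rw [Finsupp.finset_sum_apply]
  by_cases hz : ∀ j, bb j i = 0
  · simp [hz]
  · push_neg at hz
    obtain ⟨j0, hj0⟩ := hz
    have hsum : ∑ j, bb j i = bb j0 i := by
      apply Finset.sum_eq_single_of_mem j0 (Finset.mem_univ _)
      intro j _ hjne
      by_contra hbj
      have hi1 : i ∈ T j := hsupp j (Finsupp.mem_support_iff.mpr hbj)
      have hi2 : i ∈ T j0 := hsupp j0 (Finsupp.mem_support_iff.mpr hj0)
      exact Set.disjoint_left.mp (hdisj hjne) hi1 hi2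
    rw [hsum]
    calc bb j0 i ≤ (e + g j0) i := (Finsupp.le_def).mp (hle j0) i
    _ = e i + g j0 i := by simp
    _ ≤ e i + ∑ j, g j i := by
        have : g j0 i ≤ ∑ j, g j i :=
          Finset.single_le_sum (f := fun j => g j i) (fun _ _ => Nat.zero_le _)
            (Finset.mem_univ j0)
        omega
    _ = (e + ∑ j, g j) i := by rw [Finsupp.add_apply, Finsupp.finset_sum_apply]

/-- From a monomial in an ideal that is "prime on monomials", extract a variable. -/
lemma exists_X_mem {p : Ideal (MvPolynomial (Fin n) K)}
    (hne : (1 : MvPolynomial (Fin n) K) ∉ p)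
    (hmp : ∀ m1 m2 : Fin n →₀ ℕ, MvPolynomial.monomial (m1 + m2) (1:K) ∈ p →
      MvPolynomial.monomial m1 (1:K) ∈ p ∨ MvPolynomial.monomial m2 (1:K) ∈ p) :
    ∀ N (b : Fin n →₀ ℕ), b.degree ≤ N → b ≠ 0 → MvPolynomial.monomial b (1:K) ∈ p →
      ∃ i, MvPolynomial.X i ∈ p ∧ b i ≠ 0 := by
  intro N
  induction N with
  | zero =>
    intro b hd hb0 _
    exact absurd ((Finsupp.degree_eq_zero_iff b).mp (Nat.le_zero.mp hd)) hb0
  | succ N ih =>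
    intro b hd hb0 hbp
    obtain ⟨i, hi⟩ := Finsupp.support_nonempty_iff.mpr hb0
    have hile : Finsupp.single i 1 ≤ b :=
      Finsupp.single_le_iff.mpr (Nat.one_le_iff_ne_zero.mpr (Finsupp.mem_support_iff.mp hi))
    have hsplit : b = Finsupp.single i 1 + (b - Finsupp.single i 1) := by
      rw [add_comm, tsub_add_cancel_of_le hile]
    rcases hmp (Finsupp.single i 1) (b - Finsupp.single i 1) (by rw [← hsplit]; exact hbp)
      with h | h
    · refine ⟨i, ?_, Finsupp.mem_support_iff.mp hi⟩
      rw [MvPolynomial.X]; exact h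
    · set b2 := b - Finsupp.single i 1 with hb2
      have hb2ne : b2 ≠ 0 := by
        intro h0
        apply hne
        have : MvPolynomial.monomial (0 : Fin n →₀ ℕ) (1:K) = 1 := by
          rw [MvPolynomial.monomial_zero', map_one]
        rw [← this, ← h0]
        exact h
      have hb2d : b2.degree ≤ N := by
        have : b.degree = 1 + b2.degree := by
          rw [hsplit, degE_add, degE_single]
        omega
      obtain ⟨i', hi', hbne⟩ := ih b2 hb2d hb2ne h
      refine ⟨i', hi', ?_⟩
      intro h0
      apply hbne
      have : b2 ≤ b := tsub_le_self
      have := (Finsupp.le_def).mp this i'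
      omega

/-- The ideal generated by a set of variables is prime. -/
lemma span_X_isPrime (V : Set (Fin n)) :
    (Ideal.span ((fun i => (MvPolynomial.X i : MvPolynomial (Fin n) K)) '' V)).IsPrime := by
  classical
  set PV := Ideal.span ((fun i => (MvPolynomial.X i : MvPolynomial (Fin n) K)) '' V) with hPV
  set φ : MvPolynomial (Fin n) K →ₐ[K] MvPolynomial (Fin n) K :=
    MvPolynomial.aeval (fun i => if i ∈ V then 0 else MvPolynomial.X i) with hφ
  have hker : ∀ f ∈ PV, φ f = 0 := by
    intro f hf
    have : PV ≤ RingHom.ker (φ : MvPolynomial (Fin n) K →+* MvPolynomial (Fin n) K) := by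
      rw [hPV, Ideal.span_le]
      rintro x ⟨i, hiV, rfl⟩
      simp only [SetLike.mem_coe, RingHom.mem_ker, AlgHom.coe_toRingHom, hφ,
        MvPolynomial.aeval_X, if_pos hiV]
    exact this hf
  have hsub : ∀ f : MvPolynomial (Fin n) K, f - φ f ∈ PV := by
    intro f
    induction f using MvPolynomial.induction_on' with
    | monomial u a =>
      by_cases hu : ∃ i ∈ u.support, i ∈ V
      · obtain ⟨i, hiu, hiV⟩ := hu
        have hmem : MvPolynomial.monomial u a ∈ PV := by
          have hile : Finsupp.single i 1 ≤ u :=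
            Finsupp.single_le_iff.mpr (Nat.one_le_iff_ne_zero.mpr (Finsupp.mem_support_iff.mp hiu))
          have : MvPolynomial.monomial u a
              = MvPolynomial.monomial (u - Finsupp.single i 1) a * MvPolynomial.X i := by
            rw [MvPolynomial.X, MvPolynomial.monomial_mul, mul_one, tsub_add_cancel_of_le hile]
          rw [this]
          exact Ideal.mul_mem_left _ _ (Ideal.subset_span ⟨i, hiV, rfl⟩)
        have hzero : φ (MvPolynomial.monomial u a) = 0 := by
          rw [hφ, MvPolynomial.aeval_monomial]
          have : (u.prod fun i k => (if i ∈ V then 0 else MvPolynomial.X i : MvPolynomial (Fin n) K) ^ k) = 0 := by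
            apply Finset.prod_eq_zero hiu
            simp only [if_pos hiV]
            exact zero_pow (Finsupp.mem_support_iff.mp hiu)
          rw [this, mul_zero]
        rw [hzero, sub_zero]
        exact hmem
      · push_neg at hu
        have : φ (MvPolynomial.monomial u a) = MvPolynomial.monomial u a := by
          rw [hφ, MvPolynomial.aeval_monomial]
          have : (u.prod fun i k => (if i ∈ V then 0 else MvPolynomial.X i : MvPolynomial (Fin n) K) ^ k)
              = u.prod fun i k => (MvPolynomial.X i) ^ k := by
            apply Finset.prod_congr rfl
            intro i hiu
            simp only [if_neg (hu i hiu)]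
          rw [this, MvPolynomial.algebraMap_eq, ← MvPolynomial.monomial_eq]
        rw [this, sub_self]
        exact zero_mem _
    | add p q hp hq =>
      have : p + q - φ (p + q) = (p - φ p) + (q - φ q) := by
        rw [map_add]; ring
      rw [this]
      exact Ideal.add_mem _ hp hq
  constructor
  · intro htop
    have h1 : (1 : MvPolynomial (Fin n) K) ∈ PV := htop ▸ Submodule.mem_top
    have := hker 1 h1
    rw [map_one] at this
    exact one_ne_zero this
  · intro f g hfg
    have h0 : φ f * φ g = 0 := by rw [← map_mul]; exact hker _ hfg
    rcases mul_eq_zero.mp h0 with h | h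
    · left
      have := hsub f
      rw [h, sub_zero] at this
      exact this
    · right
      have := hsub g
      rw [h, sub_zero] at this
      exact this

end Stmt9Aux

namespace Stmt9Aux

open Finsupp MvPolynomial

variable {K : Type} [Field K] {n : ℕ}

lemma colon_monomial_eq_annihilator (L : Ideal (MvPolynomial (Fin n) K))
    (g : MvPolynomial (Fin n) K) :
    L.colon (Ideal.span {g})
      = (Submodule.span (MvPolynomial (Fin n) K)
          {(Ideal.Quotient.mk L) g}).annihilator := by
  ext r
  rw [Submodule.mem_annihilator_span_singleton, Ideal.mem_colon_span_singleton]
  have hsm : r • (Ideal.Quotient.mk L g) = Ideal.Quotient.mk L (r * g) := by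
    rw [← smul_eq_mul]
    exact (Submodule.Quotient.mk_smul L r g).symm
  rw [hsm, Ideal.Quotient.eq_zero_iff_mem]

lemma exists_assoc_colon_monomial {G : Set (Fin n →₀ ℕ)}
    (h1L : (1 : MvPolynomial (Fin n) K) ∉ msp (K := K) G) :
    ∃ w : Fin n →₀ ℕ, MvPolynomial.monomial w (1:K) ∉ msp (K := K) G ∧
      ((msp (K := K) G).colon
        (Ideal.span {MvPolynomial.monomial w (1:K)})) ∈ assOf (msp (K := K) G) := by
  classical
  set L := msp (K := K) G with hL
  set Sig : Set (Ideal (MvPolynomial (Fin n) K)) :=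
    {q | ∃ w : Fin n →₀ ℕ, MvPolynomial.monomial w (1:K) ∉ L ∧
      q = L.colon (Ideal.span {MvPolynomial.monomial w (1:K)})} with hSig
  have hSgne : Sig.Nonempty := by
    refine ⟨L.colon (Ideal.span {MvPolynomial.monomial (0 : Fin n →₀ ℕ) (1:K)}), 0, ?_, rfl⟩
    rw [MvPolynomial.monomial_zero', map_one]
    exact h1L
  obtain ⟨q, hqSg, hqmax⟩ :=
    (set_has_maximal_iff_noetherian.mpr (inferInstance :
      IsNoetherian (MvPolynomial (Fin n) K) (MvPolynomial (Fin n) K))) Sig hSgne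
  obtain ⟨w, hw, hqe⟩ := hqSg
  -- basic facts about q
  have hq1 : (1 : MvPolynomial (Fin n) K) ∉ q := by
    rw [hqe]
    intro h1
    rw [Ideal.mem_colon_span_singleton, one_mul] at h1
    exact hw h1
  have hmonClosed : ∀ f ∈ q, ∀ m ∈ f.support, MvPolynomial.monomial m (1:K) ∈ q := by
    intro f hf m hm
    rw [hqe, Ideal.mem_colon_span_singleton] at hf ⊢
    have hcoeff : MvPolynomial.coeff (m + w) (f * MvPolynomial.monomial w (1:K)) ≠ 0 := by
      rw [MvPolynomial.coeff_mul_monomial, mul_one]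
      exact MvPolynomial.mem_support_iff.mp hm
    obtain ⟨a, haG, hale⟩ := mem_msp_iff.mp hf (m + w) (MvPolynomial.mem_support_iff.mpr hcoeff)
    have : MvPolynomial.monomial m (1:K) * MvPolynomial.monomial w (1:K)
        = MvPolynomial.monomial (m + w) (1:K) := by
      rw [MvPolynomial.monomial_mul, one_mul]
    rw [this]
    exact monomial_mem_msp haG hale
  have hmonPrime : ∀ m1 m2 : Fin n →₀ ℕ,
      MvPolynomial.monomial (m1 + m2) (1:K) ∈ q →
      MvPolynomial.monomial m1 (1:K) ∈ q ∨ MvPolynomial.monomial m2 (1:K) ∈ q := by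
    intro m1 m2 h12
    by_cases h2 : MvPolynomial.monomial m2 (1:K) ∈ q
    · right; exact h2
    · left
      have hwm2 : MvPolynomial.monomial (w + m2) (1:K) ∉ L := by
        intro hmem
        apply h2
        rw [hqe, Ideal.mem_colon_span_singleton]
        have : MvPolynomial.monomial m2 (1:K) * MvPolynomial.monomial w (1:K)
            = MvPolynomial.monomial (w + m2) (1:K) := by
          rw [MvPolynomial.monomial_mul, one_mul, add_comm]
        rw [this]; exact hmem
      set q' := L.colon (Ideal.span {MvPolynomial.monomial (w + m2) (1:K)}) with hq'
      have hq'Sg : q' ∈ Sig := ⟨w + m2, hwm2, rfl⟩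
      have hqq' : q ≤ q' := by
        intro h hh
        rw [hqe, Ideal.mem_colon_span_singleton] at hh
        rw [hq', Ideal.mem_colon_span_singleton]
        have : h * MvPolynomial.monomial (w + m2) (1:K)
            = (h * MvPolynomial.monomial w (1:K)) * MvPolynomial.monomial m2 (1:K) := by
          rw [mul_assoc, MvPolynomial.monomial_mul, one_mul]
        rw [this]
        exact Ideal.mul_mem_right _ _ hh
      have heq : q = q' := by
        by_contra hne
        exact hqmax q' hq'Sg (lt_of_le_of_ne hqq' hne)
      rw [heq, hq', Ideal.mem_colon_span_singleton]
      have : MvPolynomial.monomial m1 (1:K) * MvPolynomial.monomial (w + m2) (1:K)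
          = MvPolynomial.monomial (m1 + m2) (1:K) * MvPolynomial.monomial w (1:K) := by
        simp only [MvPolynomial.monomial_mul, one_mul]
        congr 1
        rw [add_comm w m2, ← add_assoc]
      rw [this]
      rw [hqe, Ideal.mem_colon_span_singleton] at h12
      exact h12
  -- q is generated by the variables it contains
  set V : Set (Fin n) := {i | MvPolynomial.X i ∈ q} with hV
  set PV : Ideal (MvPolynomial (Fin n) K) :=
    Ideal.span ((fun i => (MvPolynomial.X i : MvPolynomial (Fin n) K)) '' V) with hPVdef
  have hqPV : q = PV := by
    apply le_antisymm
    · intro f hf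
      rw [f.as_sum]
      refine Ideal.sum_mem _ fun m hm => ?_
      have hmq : MvPolynomial.monomial m (1:K) ∈ q := hmonClosed f hf m hm
      have hm0 : m ≠ 0 := by
        intro h0
        apply hq1
        have : MvPolynomial.monomial m (1:K) = 1 := by
          rw [h0, MvPolynomial.monomial_zero', map_one]
        rw [← this]; exact hmq
      obtain ⟨i, hiq, hmi⟩ := exists_X_mem hq1 hmonPrime m.degree m (le_refl _) hm0 hmq
      have hile : Finsupp.single i 1 ≤ m :=
        Finsupp.single_le_iff.mpr (Nat.one_le_iff_ne_zero.mpr hmi)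
      have : MvPolynomial.monomial m (MvPolynomial.coeff m f)
          = MvPolynomial.monomial (m - Finsupp.single i 1) (MvPolynomial.coeff m f)
            * MvPolynomial.X i := by
        rw [MvPolynomial.X, MvPolynomial.monomial_mul, mul_one, tsub_add_cancel_of_le hile]
      rw [this]
      exact Ideal.mul_mem_left _ _ (Ideal.subset_span ⟨i, hiq, rfl⟩)
    · rw [hPVdef, Ideal.span_le]
      rintro x ⟨i, hiV, rfl⟩
      exact hiV
  have hprime : Ideal.IsPrime q := by
    rw [hqPV]
    exact span_X_isPrime V
  refine ⟨w, hw, ?_⟩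
  rw [← hqe]
  have hcol : q = (⊥ : Submodule (MvPolynomial (Fin n) K) (MvPolynomial (Fin n) K ⧸ L)).colon
      {Ideal.Quotient.mk L (MvPolynomial.monomial w (1:K))} := by
    ext r
    rw [hqe, Ideal.mem_colon_span_singleton, Submodule.mem_colon_singleton, Submodule.mem_bot]
    have hsm : r • (Ideal.Quotient.mk L (MvPolynomial.monomial w (1:K)))
        = Ideal.Quotient.mk L (r * MvPolynomial.monomial w (1:K)) := by
      rw [← smul_eq_mul]
      exact (Submodule.Quotient.mk_smul L r _).symm
    rw [hsm, Ideal.Quotient.eq_zero_iff_mem]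
  exact ⟨hprime, Ideal.Quotient.mk L (MvPolynomial.monomial w (1:K)),
    by rw [← hcol, hprime.radical]⟩

end Stmt9Aux

open Stmt9Aux Finsupp

/-- Theorem 5.2, lower bound: let `I_1,…,I_t` be nonzero proper monomial
ideals with pairwise disjoint supports such that `v(I_j^k) = α(I_j)·k − 1` for all `k ≫ 0`.
Then for every `k ≥ 1`,
`v((I_1+⋯+I_t)^k) ≥ (min_j α(I_j))·k + (∑_j α(I_j) − min_j α(I_j) − t)`. -/
theorem stmt9 {K : Type} [Field K] {n t : ℕ} (ht : 0 < t)
    (I : Fin t → Ideal (MvPolynomial (Fin n) K))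
    (hnz : ∀ j, I j ≠ ⊥) (hpr : ∀ j, I j ≠ ⊤) (hmon : ∀ j, IsMonomialIdeal (I j))
    (hsupp : Pairwise fun i j => Disjoint (suppIdeal (I i)) (suppIdeal (I j)))
    (hv : ∀ j, ∃ kj : ℕ, ∀ k : ℕ, kj ≤ k → vnumber (I j ^ k) = alphaDeg (I j) * k - 1) :
    ∀ k : ℕ, 1 ≤ k →
      ((Finset.univ.inf' ⟨⟨0, ht⟩, Finset.mem_univ _⟩ fun j => alphaDeg (I j) : ℕ) : ℤ) * k +
        ((∑ j, (alphaDeg (I j) : ℤ)) -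
          ((Finset.univ.inf' ⟨⟨0, ht⟩, Finset.mem_univ _⟩ fun j => alphaDeg (I j) : ℕ) : ℤ)
          - t) ≤ (vnumber ((∑ j, I j) ^ k) : ℤ) := by
  classical
  intro k hk
  set Gm : Fin t → Set (Fin n →₀ ℕ) := fun j => minimalMonGens (I j) with hGm
  set U : Set (Fin n →₀ ℕ) := ⋃ j, Gm j with hU
  set L : Ideal (MvPolynomial (Fin n) K) := (∑ j, I j) ^ k with hLdef
  have hIeq : ∀ j, I j = msp (K := K) (Gm j) := fun j => monomialIdeal_eq_msp (hmon j)
  have hLm : L = msp (K := K) (setPow U k) := by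
    rw [hLdef, ← msp_pow]
    congr 1
    rw [← msp_iUnion]
    exact Finset.sum_congr rfl fun j _ => hIeq j
  have hGne0 : ∀ j, ∀ b ∈ Gm j, b ≠ 0 := by
    intro j b hb h0
    apply hpr j
    rw [Ideal.eq_top_iff_one]
    have hb1 := hb.1
    rw [h0, MvPolynomial.monomial_zero', map_one] at hb1
    exact hb1
  have hGsupp : ∀ j, ∀ b ∈ Gm j, ↑b.support ⊆ suppIdeal (I j) := by
    intro j b hb i hi
    exact Set.mem_biUnion hb hi
  have hGnem : ∀ j, ∃ b, b ∈ Gm j := by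
    intro j
    by_contra hemp
    push_neg at hemp
    apply hnz j
    rw [hIeq j]
    have hempty : Gm j = ∅ := Set.eq_empty_iff_forall_notMem.mpr hemp
    rw [hempty]
    unfold msp
    simp
  have hαle : ∀ j, ∀ b ∈ Gm j, alphaDeg (I j) ≤ b.degree := by
    intro j b hb
    apply Nat.sInf_le
    refine ⟨MvPolynomial.monomial b (1:K), hb.1, ?_, MvPolynomial.isHomogeneous_monomial _ rfl⟩
    simp [MvPolynomial.monomial_eq_zero]
  have hα1 : ∀ j, 1 ≤ alphaDeg (I j) := by
    intro j
    obtain ⟨b, hb⟩ := hGnem j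
    have hne : {d : ℕ | ∃ f ∈ I j, f ≠ 0 ∧ MvPolynomial.IsHomogeneous f d}.Nonempty := by
      refine ⟨b.degree, MvPolynomial.monomial b (1:K), hb.1, ?_, MvPolynomial.isHomogeneous_monomial _ rfl⟩
      simp [MvPolynomial.monomial_eq_zero]
    have hmem := Nat.sInf_mem hne
    obtain ⟨f, hfI, hf0, hfhom⟩ := hmem
    by_contra hcon
    push_neg at hcon
    have hz : alphaDeg (I j) = 0 := by
      have : sInf {d : ℕ | ∃ f ∈ I j, f ≠ 0 ∧ MvPolynomial.IsHomogeneous f d} = alphaDeg (I j) := rfl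
      omega
    obtain ⟨m, hm⟩ := Finset.nonempty_iff_ne_empty.mpr
      (fun hsupp0 => hf0 (MvPolynomial.support_eq_empty.mp hsupp0))
    have hdeg : m.degree = alphaDeg (I j) := degree_eq_of_mem_support hfhom hm
    have hm0 : m = 0 := (Finsupp.degree_eq_zero_iff m).mp (by omega)
    rw [hIeq j] at hfI
    obtain ⟨b', hbG, hble⟩ := mem_msp_iff.mp hfI m hm
    have hb'0 : b' = 0 := by
      rw [hm0] at hble
      exact nonpos_iff_eq_zero.mp hble
    exact hGne0 j b' hbG hb'0
  -- the main degree bound for any element of the v-number defining set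
  have hbound : ∀ d : ℕ, (∃ p ∈ assOf L, ∃ f : MvPolynomial (Fin n) K,
      f.IsHomogeneous d ∧ L.colon (Ideal.span {f}) = p) →
      ((Finset.univ.inf' ⟨⟨0, ht⟩, Finset.mem_univ _⟩ fun j => alphaDeg (I j) : ℕ) : ℤ) * k +
        ((∑ j, (alphaDeg (I j) : ℤ)) -
          ((Finset.univ.inf' ⟨⟨0, ht⟩, Finset.mem_univ _⟩ fun j => alphaDeg (I j) : ℕ) : ℤ)
          - t) ≤ (d : ℤ) := by
    rintro d ⟨p, hpAss, f, hfhom, hfcolon⟩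
    have hp : p.IsPrime := hpAss.isPrime
    have hfL : f ∉ L := by
      intro hfL
      apply hp.ne_top
      rw [Ideal.eq_top_iff_one, ← hfcolon, Ideal.mem_colon_span_singleton, one_mul]
      exact hfL
    have hex : ∃ e ∈ f.support, MvPolynomial.monomial e (1:K) ∉ L := by
      by_contra hc
      push_neg at hc
      apply hfL
      rw [f.as_sum]
      refine Ideal.sum_mem _ fun m hm => ?_
      have hCm : MvPolynomial.monomial m (MvPolynomial.coeff m f)
          = MvPolynomial.C (MvPolynomial.coeff m f) * MvPolynomial.monomial m (1:K) := by
        rw [MvPolynomial.C_mul_monomial, mul_one]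
      rw [hCm]
      exact Ideal.mul_mem_left _ _ (hc m hm)
    obtain ⟨e, hef, heL⟩ := hex
    have hde : e.degree = d := degree_eq_of_mem_support hfhom hef
    have hLp : L ≤ p := by
      rw [← hfcolon]
      intro x hx
      rw [Ideal.mem_colon_span_singleton]
      exact Ideal.mul_mem_right _ _ hx
    have hJp : (∑ j, I j) ≤ p := hp.le_of_pow_le hLp
    have hvar : ∀ j, ∃ i, MvPolynomial.X i ∈ p ∧ i ∈ suppIdeal (I j) := by
      intro j
      obtain ⟨b, hb⟩ := hGnem j
      have hbp : MvPolynomial.monomial b (1:K) ∈ p := by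
        apply hJp
        have hIle : I j ≤ ∑ j, I j :=
          Finset.single_le_sum (f := I) (fun _ _ => bot_le) (Finset.mem_univ j)
        exact hIle hb.1
      have hmp : ∀ m1 m2 : Fin n →₀ ℕ, MvPolynomial.monomial (m1+m2) (1:K) ∈ p →
          MvPolynomial.monomial m1 (1:K) ∈ p ∨ MvPolynomial.monomial m2 (1:K) ∈ p := by
        intro m1 m2 h12
        apply hp.mem_or_mem
        rw [MvPolynomial.monomial_mul, one_mul]
        exact h12
      have hp1 : (1 : MvPolynomial (Fin n) K) ∉ p := fun h1 =>
        hp.ne_top ((Ideal.eq_top_iff_one p).mpr h1)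
      obtain ⟨i, hip, hbi⟩ := exists_X_mem hp1 hmp b.degree b (le_refl _) (hGne0 j b hb) hbp
      exact ⟨i, hip, hGsupp j b hb (Finsupp.mem_support_iff.mpr hbi)⟩
    choose ii hiip hiisupp using hvar
    set P : Fin t → ℕ → Prop := fun j c => ∃ bb ∈ setPow (Gm j) c, bb ≤ e with hP
    set m : Fin t → ℕ := fun j => Nat.findGreatest (P j) e.degree with hmdef
    have hP0 : ∀ j, P j 0 := fun j => ⟨0, zero_mem_setPow_zero _, zero_le⟩
    have hPm : ∀ j, P j (m j) := fun j => Nat.findGreatest_spec (Nat.zero_le _) (hP0 j)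
    have hcle : ∀ j c (A : Fin n →₀ ℕ), A ∈ setPow (Gm j) c → A ≤ e → c ≤ m j := by
      intro j c A hA hAe
      apply Nat.le_findGreatest _ ⟨A, hA, hAe⟩
      have h1 : c * alphaDeg (I j) ≤ A.degree := setPow_degree (hαle j) hA
      have h2 : A.degree ≤ e.degree := degE_mono hAe
      have h3 : 1 ≤ alphaDeg (I j) := hα1 j
      calc c = c * 1 := (Nat.mul_one c).symm
      _ ≤ c * alphaDeg (I j) := Nat.mul_le_mul_left c h3
      _ ≤ e.degree := le_trans h1 h2
    set M : ℕ := ∑ j, m j with hM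
    have hMk : M < k := by
      by_contra hMk
      push_neg at hMk
      apply heL
      choose bb hbb hbbe using fun j => hPm j
      have hsum_mem : (∑ j, bb j) ∈ setPow U M := sum_mem_setPow hbb
      have hsum_le : (∑ j, bb j) ≤ e := by
        have hh := sum_le_add_of_disjoint (T := fun j => suppIdeal (I j)) hsupp
          (fun j => setPow_support (hGsupp j) (hbb j)) (g := fun _ => 0) (e := e)
          (fun j => by simpa using hbbe j)
        simpa using hh
      have hmem : MvPolynomial.monomial e (1:K) ∈ msp (K := K) (setPow U M) :=
        monomial_mem_msp hsum_mem hsum_le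
      have hsub : msp (K := K) (setPow U M) ≤ L := by
        rw [hLm, ← msp_pow, ← msp_pow]
        exact Ideal.pow_le_pow_right hMk
      exact hsub hmem
    have hperj : ∀ j, ∃ Bj : Fin n →₀ ℕ, Bj ≤ e + Finsupp.single (ii j) 1 ∧
        ↑Bj.support ⊆ suppIdeal (I j) ∧
        (alphaDeg (I j) : ℤ) * ((k:ℤ) - M + m j) ≤ (Bj.degree : ℤ) := by
      intro j
      have hXf : MvPolynomial.X (ii j) * f ∈ L := by
        have hxp := hiip j
        rw [← hfcolon, Ideal.mem_colon_span_singleton] at hxp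
        exact hxp
      have hcoeff : MvPolynomial.coeff (Finsupp.single (ii j) 1 + e)
          (MvPolynomial.X (ii j) * f) ≠ 0 := by
        rw [MvPolynomial.coeff_X_mul]
        exact MvPolynomial.mem_support_iff.mp hef
      rw [hLm] at hXf
      obtain ⟨a, haU, hale⟩ := mem_msp_iff.mp hXf _ (MvPolynomial.mem_support_iff.mpr hcoeff)
      obtain ⟨c, hcsum, A, hAmem, hAsum⟩ := setPow_iUnion_decomp haU
      have hAsupp : ∀ l, ↑(A l).support ⊆ suppIdeal (I l) :=
        fun l => setPow_support (hGsupp l) (hAmem l)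
      have hAle : ∀ l, A l ≤ a := by
        intro l
        rw [← hAsum, Finsupp.le_def]
        intro i
        rw [Finsupp.finset_sum_apply]
        exact Finset.single_le_sum (f := fun l => A l i) (fun _ _ => Nat.zero_le _)
          (Finset.mem_univ l)
      have hclem : ∀ l, l ≠ j → c l ≤ m l := by
        intro l hl
        have hAze : (A l) (ii j) = 0 := by
          by_contra hz
          have h1 : ii j ∈ suppIdeal (I l) := hAsupp l (Finsupp.mem_support_iff.mpr hz)
          exact Set.disjoint_left.mp (hsupp hl) h1 (hiisupp j)
        have hAe : A l ≤ e := by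
          rw [Finsupp.le_def]
          intro i
          by_cases hij : i = ii j
          · rw [hij, hAze]
            exact Nat.zero_le _
          · have hcomp := (Finsupp.le_def).mp ((hAle l).trans hale) i
            rwa [Finsupp.add_apply, Finsupp.single_apply,
              if_neg (fun hh => hij hh.symm), zero_add] at hcomp
        exact hcle l (c l) (A l) (hAmem l) hAe
      have hcj : (k:ℤ) - M + m j ≤ c j := by
        have h3 : ∑ l ∈ Finset.univ.erase j, c l + c j = k := by
          rw [Finset.sum_erase_add _ _ (Finset.mem_univ j)]
          exact hcsum
        have h4 : ∑ l ∈ Finset.univ.erase j, m l + m j = M := by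
          rw [Finset.sum_erase_add _ _ (Finset.mem_univ j)]
        have h2 : ∑ l ∈ Finset.univ.erase j, c l ≤ ∑ l ∈ Finset.univ.erase j, m l :=
          Finset.sum_le_sum fun l hl => hclem l (Finset.ne_of_mem_erase hl)
        omega
      refine ⟨A j, le_trans ((hAle j).trans hale) (le_of_eq (add_comm _ _)), hAsupp j, ?_⟩
      have h5 : c j * alphaDeg (I j) ≤ (A j).degree := setPow_degree (hαle j) (hAmem j)
      have h6 : (alphaDeg (I j):ℤ) * ((k:ℤ) - M + m j) ≤ (alphaDeg (I j):ℤ) * (c j:ℤ) :=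
        mul_le_mul_of_nonneg_left hcj (Int.natCast_nonneg _)
      have h7 : (alphaDeg (I j):ℤ) * (c j:ℤ) ≤ ((A j).degree : ℤ) := by
        rw [mul_comm]
        exact_mod_cast h5
      exact h6.trans h7
    choose B hBle hBsupp hBdeg using hperj
    have hsum : ∑ l, B l ≤ e + ∑ l, Finsupp.single (ii l) 1 :=
      sum_le_add_of_disjoint hsupp hBsupp hBle
    have hdegsum : ∑ l, ((B l).degree : ℤ) ≤ (d:ℤ) + t := by
      have h1 : (∑ l, B l).degree ≤ (e + ∑ l, Finsupp.single (ii l) 1).degree := degE_mono hsum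
      rw [degE_sum, degE_add, degE_sum] at h1
      have h2 : ∑ l, (Finsupp.single (ii l) 1).degree = t := by
        simp only [degE_single, Finset.sum_const, Finset.card_univ, Fintype.card_fin, smul_eq_mul,
          mul_one]
      rw [h2, hde] at h1
      exact_mod_cast h1
    have hfinal : ∑ l, (alphaDeg (I l) : ℤ) * ((k:ℤ) - M + m l) ≤ (d:ℤ) + t :=
      le_trans (Finset.sum_le_sum fun l _ => hBdeg l) hdegsum
    -- arithmetic conclusion
    set mn : ℕ := Finset.univ.inf' ⟨⟨0, ht⟩, Finset.mem_univ _⟩ fun j => alphaDeg (I j)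
      with hmn
    obtain ⟨j0, _, hj0⟩ := Finset.exists_mem_eq_inf'
      (⟨⟨0, ht⟩, Finset.mem_univ _⟩ : Finset.univ.Nonempty) fun j => alphaDeg (I j)
    have hmnle : ∀ j, (mn:ℤ) ≤ (alphaDeg (I j) : ℤ) := fun j => by
      exact_mod_cast Finset.inf'_le _ (Finset.mem_univ j)
    have hSα : (mn:ℤ) ≤ ∑ l, (alphaDeg (I l) : ℤ) := by
      rw [hmn, hj0]
      exact Finset.single_le_sum (f := fun l => (alphaDeg (I l) : ℤ))
        (fun l _ => Int.natCast_nonneg _) (Finset.mem_univ j0)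
    have hexpand : ∑ l, (alphaDeg (I l) : ℤ) * ((k:ℤ) - M + m l)
        = ((k:ℤ) - M) * (∑ l, (alphaDeg (I l) : ℤ)) + ∑ l, (alphaDeg (I l) : ℤ) * (m l : ℤ) := by
      rw [Finset.mul_sum, ← Finset.sum_add_distrib]
      apply Finset.sum_congr rfl
      intro l _
      ring
    have hαm : (mn:ℤ) * (M:ℤ) ≤ ∑ l, (alphaDeg (I l) : ℤ) * (m l : ℤ) := by
      have hMint : (M:ℤ) = ∑ l, (m l : ℤ) := by
        rw [hM]
        push_cast
        ring
      rw [hMint, Finset.mul_sum]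
      apply Finset.sum_le_sum
      intro l _
      exact mul_le_mul_of_nonneg_right (hmnle l) (Int.natCast_nonneg _)
    have hs1 : (1:ℤ) ≤ (k:ℤ) - M := by
      have : (M:ℤ) < k := by exact_mod_cast hMk
      omega
    have hmn0 : (0:ℤ) ≤ mn := Int.natCast_nonneg _
    nlinarith [hfinal, hexpand, hαm, hs1, hmn0, hSα,
      mul_nonneg (by linarith : (0:ℤ) ≤ (k:ℤ) - M - 1)
        (by linarith : (0:ℤ) ≤ (∑ l, (alphaDeg (I l) : ℤ)) - mn)]
  -- nonemptiness of the defining set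
  have hUdeg : ∀ g ∈ U, 1 ≤ g.degree := by
    intro g hg
    obtain ⟨j, hj⟩ := Set.mem_iUnion.mp hg
    have := hGne0 j g hj
    rcases Nat.eq_zero_or_pos g.degree with h | h
    · exact absurd ((Finsupp.degree_eq_zero_iff g).mp h) this
    · exact h
  have hLne1 : (1 : MvPolynomial (Fin n) K) ∉ msp (K := K) (setPow U k) := by
    intro h1
    have h0mem : (0 : Fin n →₀ ℕ) ∈ (1 : MvPolynomial (Fin n) K).support := by
      rw [MvPolynomial.mem_support_iff]
      simp
    obtain ⟨a, haU, hale⟩ := mem_msp_iff.mp h1 0 h0mem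
    have ha0 : a = 0 := nonpos_iff_eq_zero.mp hale
    have hdeg : k * 1 ≤ a.degree := setPow_degree hUdeg haU
    rw [ha0, map_zero] at hdeg
    omega
  obtain ⟨w, hwL, hwass⟩ := exists_assoc_colon_monomial hLne1
  have hSvne : ∃ d : ℕ, ∃ p ∈ assOf L, ∃ f : MvPolynomial (Fin n) K,
      f.IsHomogeneous d ∧ L.colon (Ideal.span {f}) = p := by
    refine ⟨w.degree, L.colon (Ideal.span {MvPolynomial.monomial w (1:K)}), ?_,
      MvPolynomial.monomial w (1:K), MvPolynomial.isHomogeneous_monomial _ rfl, rfl⟩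
    rw [hLm]
    exact hwass
  have hvn : vnumber L = sInf {d : ℕ | ∃ p ∈ assOf L, ∃ f : MvPolynomial (Fin n) K,
      f.IsHomogeneous d ∧ L.colon (Ideal.span {f}) = p} := rfl
  have hmemInf := Nat.sInf_mem hSvne
  exact hbound _ hmemInf
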